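/- Let 0 < ϖ < 2, 0 ≤ β < 1, and consider a Bernoulli(p) source X with p ∈ [0,1/2] passed through the binary erasure transfer matrix with erasure probability β; the message importance loss equals Φ_ϖ(p) = (1−β)·[p·exp(ϖ(1−p)) + (1−p)·exp(ϖp) − 1], and the mutual information equals I(X;Y) = (1−β)·H(p). Write C_β = (1−β)(exp(ϖ/2) − 1). Then the maximum of I(X;Y) over p ∈ [0,1/2] subject to Φ_ϖ(p) ≤ ε equals: 1−β if ε ≥ C_β; and (1−β)·H(p_e) if 0 < ε ≤ C_β, where p_e ∈ [0,1/2] is the solution of (1−β)·[p_e·exp(ϖ(1−p_e)) + (1−p_e)·exp(ϖp_e) − 1] = ε and H(t) = −t·log₂ t − (1−t)·log₂(1−t) is the binary entropy function. -/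

import Mathlib

/-- Binary Shannon entropy (base 2): `H(t) = −t·log₂ t − (1−t)·log₂(1−t)`. -/
noncomputable def binEnt (t : ℝ) : ℝ :=
  -(t * Real.logb 2 t) - (1 - t) * Real.logb 2 (1 - t)


lemma binEnt_eq (t : ℝ) : binEnt t = Real.binEntropy t / Real.log 2 := by
  simp [binEnt, Real.binEntropy, Real.logb, Real.log_inv]
  ring

lemma binEnt_half : binEnt (1/2) = 1 := by
  rw [binEnt_eq, show (1:ℝ)/2 = 2⁻¹ by norm_num, Real.binEntropy_two_inv]
  exact div_self (Real.log_ne_zero_of_pos_of_ne_one two_pos (by norm_num))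

lemma binEnt_le_one (t : ℝ) : binEnt t ≤ 1 := by
  rw [binEnt_eq]
  rw [div_le_one (Real.log_pos (by norm_num))]
  exact Real.binEntropy_le_log_two

lemma binEnt_monoOn : MonotoneOn binEnt (Set.Icc (0:ℝ) (1/2)) := by
  have : Set.Icc (0:ℝ) (1/2) = Set.Icc (0:ℝ) 2⁻¹ := by norm_num
  rw [this]
  intro a ha b hb hab
  rw [binEnt_eq, binEnt_eq]
  exact (div_le_div_iff_of_pos_right (Real.log_pos (by norm_num))).mpr
    (Real.binEntropy_strictMonoOn.monotoneOn ha hb hab)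

/-- `f p = p·e^{ϖ(1−p)} + (1−p)·e^{ϖp}` is strictly monotone on `[0,1/2]` for `0<ϖ<2`. -/
lemma f_strictMono (ϖ : ℝ) (hϖ : 0 < ϖ) (hϖ2 : ϖ < 2) :
    StrictMonoOn (fun p : ℝ => p * Real.exp (ϖ * (1 - p)) + (1 - p) * Real.exp (ϖ * p))
      (Set.Icc (0:ℝ) (1/2)) := by
  have hderiv : ∀ p : ℝ, HasDerivAt
      (fun p : ℝ => p * Real.exp (ϖ * (1 - p)) + (1 - p) * Real.exp (ϖ * p))
      ((1 - ϖ * p) * Real.exp (ϖ * (1 - p)) - (1 - ϖ * (1 - p)) * Real.exp (ϖ * p)) p := by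
    intro p
    have h1 : HasDerivAt (fun x : ℝ => ϖ * (1 - x)) (-ϖ) p := by
      simpa using ((hasDerivAt_const p (1:ℝ)).sub (hasDerivAt_id p)).const_mul ϖ
    have h2 : HasDerivAt (fun x : ℝ => ϖ * x) ϖ p := by
      simpa using (hasDerivAt_id p).const_mul ϖ
    have h3 := ((hasDerivAt_id p).mul h1.exp).add
      (((hasDerivAt_const p (1:ℝ)).sub (hasDerivAt_id p)).mul h2.exp)
    refine h3.congr_deriv ?_
    simp only [id_eq, Pi.sub_apply]
    ring
  apply strictMonoOn_of_deriv_pos (convex_Icc _ _)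
  · exact Continuous.continuousOn (by continuity)
  · intro p hp
    rw [interior_Icc] at hp
    rw [(hderiv p).deriv]
    obtain ⟨hp0, hp1⟩ := hp
    have hu : 0 < ϖ * (1 - 2 * p) := by nlinarith
    have ha : 0 < 1 - ϖ * p := by nlinarith
    have hsplit : ϖ * (1 - p) = ϖ * p + ϖ * (1 - 2 * p) := by ring
    rw [hsplit, Real.exp_add]
    have he : (1:ℝ) < Real.exp (ϖ * (1 - 2 * p)) := Real.one_lt_exp_iff.mpr hu
    nlinarith [Real.exp_pos (ϖ * p), Real.exp_pos (ϖ * (1 - 2*p)), he,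
      mul_pos ha (sub_pos.mpr he)]


/-- Bitrate of the binary erasure channel constrained by a message
importance loss `ε > 0`. The loss equals
`Φ_ϖ(p) = (1−β)·[p·exp(ϖ(1−p)) + (1−p)·exp(ϖp) − 1]`, the mutual information equals
`I(X;Y) = (1−β)·H(p)`, and with `C_β = (1−β)(exp(ϖ/2) − 1)`, the maximum of `I(X;Y)` over
`p ∈ [0,1/2]` subject to `Φ_ϖ(p) ≤ ε` is `1−β` when `ε ≥ C_β`, and `(1−β)·H(p_e)` when
`0 < ε ≤ C_β`, where `p_e ∈ [0,1/2]` solves `Φ_ϖ(p_e) = ε`. -/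
theorem bitrate_bec_mim_constraint (ϖ β ε : ℝ) (hϖ : 0 < ϖ) (hϖ2 : ϖ < 2)
    (hβ0 : 0 ≤ β) (hβ1 : β < 1) (hε : 0 < ε) :
    ((1 - β) * (Real.exp (ϖ / 2) - 1) ≤ ε →
      IsGreatest {r : ℝ | ∃ p ∈ Set.Icc (0:ℝ) (1/2),
          (1 - β) * (p * Real.exp (ϖ * (1 - p)) + (1 - p) * Real.exp (ϖ * p) - 1) ≤ ε ∧
          r = (1 - β) * binEnt p}
        (1 - β)) ∧
    (ε ≤ (1 - β) * (Real.exp (ϖ / 2) - 1) →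
      ∀ pe ∈ Set.Icc (0:ℝ) (1/2),
        (1 - β) * (pe * Real.exp (ϖ * (1 - pe)) + (1 - pe) * Real.exp (ϖ * pe) - 1) = ε →
        IsGreatest {r : ℝ | ∃ p ∈ Set.Icc (0:ℝ) (1/2),
            (1 - β) * (p * Real.exp (ϖ * (1 - p)) + (1 - p) * Real.exp (ϖ * p) - 1) ≤ ε ∧
            r = (1 - β) * binEnt p}
          ((1 - β) * binEnt pe)) := by
  have hb : (0:ℝ) < 1 - β := by linarith
  constructor
  · intro hC
    constructor
    · refine ⟨1/2, ⟨by norm_num, le_refl _⟩, ?_, by rw [binEnt_half]; ring⟩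
      have : (1:ℝ)/2 * Real.exp (ϖ * (1 - 1/2)) + (1 - 1/2) * Real.exp (ϖ * (1/2)) - 1
          = Real.exp (ϖ / 2) - 1 := by
        rw [show ϖ * (1 - 1/2) = ϖ / 2 by ring, show ϖ * (1/2) = ϖ / 2 by ring]; ring
      rw [this]; exact hC
    · rintro r ⟨p, hp, _, rfl⟩
      have := binEnt_le_one p
      nlinarith
  · intro hC pe hpe heq
    constructor
    · exact ⟨pe, hpe, le_of_eq heq, rfl⟩
    · rintro r ⟨p, hp, hcon, rfl⟩
      have hfle : p * Real.exp (ϖ * (1 - p)) + (1 - p) * Real.exp (ϖ * p)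
          ≤ pe * Real.exp (ϖ * (1 - pe)) + (1 - pe) * Real.exp (ϖ * pe) := by
        rw [← heq] at hcon
        nlinarith
      have hppe : p ≤ pe := by
        by_contra hlt
        push_neg at hlt
        exact absurd (f_strictMono ϖ hϖ hϖ2 hpe hp hlt) (not_lt.mpr hfle)
      have := binEnt_monoOn hp hpe hppe
      nlinarith
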